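/- Let E be a finite meet-semilattice and let A be the unitization over ℂ of the semigroup algebra MonoidAlgebra ℂ E. For e ∈ E set p_e := e · ∏_{f ∈ E, e ⊓ f ≠ e} (1 − f) ∈ A, and let X denote the set of minimal nonzero elements of Ẽ := { e₀(1−e₁)⋯(1−e_n) ∈ A : e_i ∈ E } \ {0} (with q ≤ p iff q p = q). Then the map e ↦ p_e is a bijection from E onto X; in particular every minimal nonzero element of Ẽ equals p_e for exactly one e ∈ E. -/

import Mathlib

/-- A meet-semilattice regarded as a commutative semigroup with product `e * f = e ⊓ f`. -/
instance semilatticeInfCommSemigroup (E : Type*) [SemilatticeInf E] : CommSemigroup E where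
  mul := (· ⊓ ·)
  mul_assoc := inf_assoc
  mul_comm := inf_comm

/-- The canonical image of `e : E` in the unitization over `ℂ` of the semigroup
algebra `MonoidAlgebra ℂ E`. -/
noncomputable def semilatticeBasis {E : Type*} [SemilatticeInf E] (e : E) :
    Unitization ℂ (MonoidAlgebra ℂ E) :=
  Unitization.inr (MonoidAlgebra.single e (1 : ℂ))

/-- The set `Ẽ` of nonzero elements of the form `e₀ (1-e₁) ⋯ (1-eₙ)`. -/
def tildeE (E : Type*) [SemilatticeInf E] : Set (Unitization ℂ (MonoidAlgebra ℂ E)) :=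
  {p | p ≠ 0 ∧ ∃ (e₀ : E) (es : List E),
    p = semilatticeBasis e₀ * (es.map fun e => 1 - semilatticeBasis e).prod}

/-- The set `X` of minimal nonzero elements of `Ẽ`, where `q ≤ p` iff `q p = q`. -/
def minimalsE (E : Type*) [SemilatticeInf E] : Set (Unitization ℂ (MonoidAlgebra ℂ E)) :=
  {p | p ∈ tildeE E ∧ ∀ q ∈ tildeE E, q * p = q → q = p}

/-- The element `p_e = e ∏_{f : e ⊓ f ≠ e} (1 - f)`. -/
noncomputable def minProj {E : Type*} [SemilatticeInf E] [Fintype E] [DecidableEq E] (e : E) :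
    Unitization ℂ (MonoidAlgebra ℂ E) :=
  semilatticeBasis e *
    ∏ f ∈ Finset.univ.filter (fun f => e ⊓ f ≠ e), (1 - semilatticeBasis f)

section aux
set_option linter.unusedSectionVars false

variable {E : Type*} [SemilatticeInf E] [Fintype E] [DecidableEq E]

lemma mul_eq_inf (a b : E) : a * b = a ⊓ b := rfl

/-- sum functional -/
noncomputable def Sg (g : E) (x : MonoidAlgebra ℂ E) : ℂ :=
  ∑ f : E, if g ⊓ f = g then x.coeff f else 0

lemma Sg_single (g c : E) (v : ℂ) : Sg g (MonoidAlgebra.single c v) = if g ⊓ c = g then v else 0 := by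
  unfold Sg
  rw [Finset.sum_eq_single c]
  · simp [MonoidAlgebra.coeff_single, Finsupp.single_apply]
  · intro f _ hf
    simp [MonoidAlgebra.coeff_single, Finsupp.single_apply, Ne.symm hf]
  · simp

lemma Sg_add (g : E) (x y : MonoidAlgebra ℂ E) : Sg g (x + y) = Sg g x + Sg g y := by
  unfold Sg
  rw [← Finset.sum_add_distrib]
  apply Finset.sum_congr rfl
  intro f _
  split_ifs <;> [exact Finsupp.add_apply x.coeff y.coeff f; simp]

lemma Sg_smul (g : E) (c : ℂ) (x : MonoidAlgebra ℂ E) : Sg g (c • x) = c * Sg g x := by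
  unfold Sg
  rw [Finset.mul_sum]
  apply Finset.sum_congr rfl
  intro f _
  split_ifs <;> [exact Finsupp.smul_apply c x.coeff f; simp]

lemma Sg_zero (g : E) : Sg g 0 = 0 := by simp [Sg]

lemma Sg_mul (g : E) (x y : MonoidAlgebra ℂ E) : Sg g (x * y) = Sg g x * Sg g y := by
  have hx : x = ∑ a : E, MonoidAlgebra.single a (x.coeff a) := by
    ext1; rw [MonoidAlgebra.coeff_sum]; exact (Finsupp.univ_sum_single x.coeff).symm
  have hy : y = ∑ b : E, MonoidAlgebra.single b (y.coeff b) := by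
    ext1; rw [MonoidAlgebra.coeff_sum]; exact (Finsupp.univ_sum_single y.coeff).symm
  have hsum : ∀ z : E → MonoidAlgebra ℂ E, Sg g (∑ a : E, z a) = ∑ a : E, Sg g (z a) := by
    intro z
    induction (Finset.univ : Finset E) using Finset.induction with
    | empty => simp [Sg_zero]
    | insert _ _ h ih => rw [Finset.sum_insert h, Finset.sum_insert h, Sg_add, ih]
  conv_lhs => rw [hx, hy, Finset.sum_mul_sum]
  rw [hsum]
  rw [Finset.sum_congr rfl fun a _ => hsum fun b => MonoidAlgebra.single a (x.coeff a) * MonoidAlgebra.single b (y.coeff b)]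
  clear hx hy
  have key : ∀ a b : E, Sg g (MonoidAlgebra.single a (x.coeff a) * MonoidAlgebra.single b (y.coeff b))
      = (if g ⊓ a = g then x.coeff a else 0) * (if g ⊓ b = g then y.coeff b else 0) := by
    intro a b
    rw [MonoidAlgebra.single_mul_single, Sg_single, mul_eq_inf]
    have : g ⊓ (a ⊓ b) = g ↔ (g ⊓ a = g ∧ g ⊓ b = g) := by
      simp only [inf_eq_left, le_inf_iff]
    split_ifs with h h1 h2 h2 <;> simp_all
  calc ∑ a : E, ∑ b : E, Sg g (MonoidAlgebra.single a (x.coeff a) * MonoidAlgebra.single b (y.coeff b))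
      = ∑ a : E, ∑ b : E, (if g ⊓ a = g then x.coeff a else 0) * (if g ⊓ b = g then y.coeff b else 0) := by
        apply Finset.sum_congr rfl; intro a _; apply Finset.sum_congr rfl; intro b _; exact key a b
    _ = Sg g x * Sg g y := by unfold Sg; rw [← Finset.sum_mul_sum]

/-- The character at `g`. -/
noncomputable def chi (g : E) : Unitization ℂ (MonoidAlgebra ℂ E) →+* ℂ where
  toFun a := a.fst + Sg g a.snd
  map_one' := by simp [Sg_zero]
  map_zero' := by simp [Sg_zero]
  map_add' a b := by simp [Sg_add]; ring
  map_mul' a b := by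
    simp only [Unitization.fst_mul, Unitization.snd_mul, Sg_add, Sg_mul, Sg_smul]
    ring

lemma chi_apply (g : E) (a : Unitization ℂ (MonoidAlgebra ℂ E)) :
    chi g a = a.fst + Sg g a.snd := rfl

lemma chi_basis (g e : E) : chi g (semilatticeBasis e) = if g ⊓ e = g then 1 else 0 := by
  rw [chi_apply, semilatticeBasis]
  simp [Sg_single]

lemma Sg_all_zero {x : MonoidAlgebra ℂ E} (h : ∀ g, Sg g x = 0) : x = 0 := by
  by_contra hx
  obtain ⟨m, hm, hmax⟩ := x.coeff.support.exists_maximal (Finsupp.support_nonempty_iff.2 (by simpa using hx))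
  have : Sg m x = x.coeff m := by
    unfold Sg
    rw [Finset.sum_eq_single m]
    · simp
    · intro f _ hf
      split_ifs with hle
      · by_contra hxf
        exact hf (le_antisymm (hmax (Finsupp.mem_support_iff.2 hxf) (inf_eq_left.mp hle)) (inf_eq_left.mp hle))
      · rfl
    · simp
  have := h m
  rw [this] at *
  exact Finsupp.mem_support_iff.1 hm (by rw [← ‹Sg m x = x.coeff m›, h m])

lemma Sg_sub (g : E) (x y : MonoidAlgebra ℂ E) : Sg g (x - y) = Sg g x - Sg g y := by
  have := Sg_add g (x - y) y
  rw [sub_add_cancel] at this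
  linear_combination -this

lemma ext_of_chi {a b : Unitization ℂ (MonoidAlgebra ℂ E)} (hfst : a.fst = b.fst)
    (h : ∀ g, chi g a = chi g b) : a = b := by
  have hsnd : a.snd = b.snd := by
    rw [← sub_eq_zero]
    apply Sg_all_zero
    intro g
    rw [Sg_sub, sub_eq_zero]
    have := h g
    rw [chi_apply, chi_apply, hfst] at this
    exact add_left_cancel this
  exact Unitization.ext hfst hsnd
end aux

section main
set_option linter.unusedSectionVars false

variable {E : Type*} [SemilatticeInf E] [Fintype E] [DecidableEq E]

lemma chi_minProj (g e : E) : chi g (minProj e) = if g = e then 1 else 0 := by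
  rw [minProj, map_mul, map_prod]
  simp only [map_sub, map_one, chi_basis]
  by_cases hge : g = e
  · subst hge
    rw [if_pos rfl, if_pos (inf_idem _)]
    rw [Finset.prod_eq_one, mul_one]
    intro f hf
    rw [Finset.mem_filter] at hf
    rw [if_neg hf.2, sub_zero]
  · rw [if_neg hge]
    by_cases hle : g ⊓ e = g
    · have hmem : g ∈ Finset.univ.filter (fun f => e ⊓ f ≠ e) := by
        rw [Finset.mem_filter]
        refine ⟨Finset.mem_univ g, ?_⟩
        rw [inf_comm, hle]
        exact hge
      rw [Finset.prod_eq_zero hmem (by rw [if_pos (inf_idem _)]; ring), mul_zero]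
    · rw [if_neg hle, zero_mul]

lemma fst_tildeE {p : Unitization ℂ (MonoidAlgebra ℂ E)} (hp : p ∈ tildeE E) : p.fst = 0 := by
  obtain ⟨-, e₀, es, rfl⟩ := hp
  rw [Unitization.fst_mul, semilatticeBasis, Unitization.fst_inr, zero_mul]

lemma exists_chi_ne {p : Unitization ℂ (MonoidAlgebra ℂ E)} (hp : p ∈ tildeE E) :
    ∃ g, chi g p ≠ 0 := by
  by_contra h
  push_neg at h
  exact hp.1 (ext_of_chi (by rw [fst_tildeE hp, Unitization.fst_zero])
    (fun g => by rw [h g, map_zero]))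

lemma list_prod_01 : ∀ l : List ℂ, (∀ c ∈ l, c = 0 ∨ c = 1) → l.prod = 0 ∨ l.prod = 1 := by
  intro l
  induction l with
  | nil => intro _; right; simp
  | cons a t ih =>
    intro h
    rw [List.prod_cons]
    rcases h a List.mem_cons_self with h0 | h1
    · left; rw [h0, zero_mul]
    · rw [h1, one_mul]; exact ih fun c hc => h c (List.mem_cons_of_mem a hc)

lemma chi_tildeE_01 {p : Unitization ℂ (MonoidAlgebra ℂ E)} (hp : p ∈ tildeE E) (g : E) :
    chi g p = 0 ∨ chi g p = 1 := by
  obtain ⟨-, e₀, es, rfl⟩ := hp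
  rw [map_mul]
  rcases (show chi g (semilatticeBasis e₀) = 0 ∨ chi g (semilatticeBasis e₀) = 1 by
    rw [chi_basis]; split_ifs <;> simp) with h0 | h1
  · left; rw [h0, zero_mul]
  · rw [h1, one_mul, map_list_prod, List.map_map]
    apply list_prod_01
    intro c hc
    rw [List.mem_map] at hc
    obtain ⟨e, -, rfl⟩ := hc
    simp only [Function.comp_apply, map_sub, map_one, chi_basis]
    split_ifs <;> simp

lemma minProj_mem_tildeE (e : E) : minProj e ∈ tildeE E := by
  refine ⟨?_, e, (Finset.univ.filter (fun f => e ⊓ f ≠ e)).toList, ?_⟩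
  · intro h
    have := chi_minProj e e
    rw [h, map_zero, if_pos rfl] at this
    exact one_ne_zero this.symm
  · rw [minProj, Finset.prod_map_toList]

lemma chi_eq_one {q : Unitization ℂ (MonoidAlgebra ℂ E)} (hq : q ∈ tildeE E) {g : E}
    (hne : chi g q ≠ 0) : chi g q = 1 :=
  (chi_tildeE_01 hq g).resolve_left hne

end main

/-- For a finite meet-semilattice `E`, the map `e ↦ p_e` is a bijection from `E` onto the
set `X` of minimal nonzero elements of `Ẽ`. -/
theorem stmt_3 {E : Type*} [SemilatticeInf E] [Fintype E] [DecidableEq E] :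
    Set.BijOn (fun e : E => minProj e) Set.univ (minimalsE E) := by
  refine ⟨?_, ?_, ?_⟩
  · intro e _
    refine ⟨minProj_mem_tildeE e, ?_⟩
    intro q hq hmul
    have hzero : ∀ g, g ≠ e → chi g q = 0 := by
      intro g hg
      have := congrArg (chi g) hmul
      rw [map_mul, chi_minProj, if_neg hg, mul_zero] at this
      exact this.symm
    obtain ⟨g, hgne⟩ := exists_chi_ne hq
    have hge : g = e := by_contra fun h => hgne (hzero g h)
    subst hge
    apply ext_of_chi
    · rw [fst_tildeE hq, fst_tildeE (minProj_mem_tildeE g)]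
    · intro h
      rw [chi_minProj]
      by_cases hhe : h = g
      · subst hhe; rw [if_pos rfl]; exact chi_eq_one hq hgne
      · rw [if_neg hhe]; exact hzero h hhe
  · intro e _ e' _ h
    have := congrArg (chi e) h
    rw [chi_minProj, chi_minProj, if_pos rfl] at this
    by_contra hne
    rw [if_neg hne] at this
    exact one_ne_zero this
  · intro q hq
    obtain ⟨hqt, hmin⟩ := hq
    obtain ⟨g, hgne⟩ := exists_chi_ne hqt
    have h1 : chi g q = 1 := chi_eq_one hqt hgne
    have hkey : minProj g * q = minProj g := by
      apply ext_of_chi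
      · rw [Unitization.fst_mul, fst_tildeE (minProj_mem_tildeE g), zero_mul]
      · intro h
        rw [map_mul, chi_minProj]
        by_cases hhe : h = g
        · subst hhe; rw [if_pos rfl, one_mul, h1]
        · rw [if_neg hhe, zero_mul]
    refine ⟨g, Set.mem_univ g, ?_⟩
    exact hmin (minProj g) (minProj_mem_tildeE g) hkey
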